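/- Let X be a real random variable on a probability space with X > 0 almost surely, and suppose there exist constants C ≥ 0 and b > 0 such that ℙ(X ≤ t) ≤ C·e^{−b/t} for all t > 0. Then for every a with 0 < a < b one has E[e^{a/X}] ≤ 1 + C·a·( a/(b−a)² + 1/(b−a) ). In particular e^{a/X} is integrable. -/

import Mathlib

open MeasureTheory

/-- Let `X > 0` a.s. be a real random variable with small-value tail bound
`ℙ(X ≤ t) ≤ C·e^{−b/t}` for all `t > 0` (`C ≥ 0`, `b > 0`). Then for every
`0 < a < b`, the random variable `e^{a/X}` is integrable and
`E[e^{a/X}] ≤ 1 + C·a·(a/(b−a)² + 1/(b−a))`. -/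
theorem integral_exp_inv_le_of_tail_bound
    {Ω : Type*} [MeasurableSpace Ω] (P : Measure Ω) [IsProbabilityMeasure P]
    (X : Ω → ℝ) (hX : Measurable X) (hX_pos : ∀ᵐ ω ∂P, 0 < X ω)
    (C b : ℝ) (hC : 0 ≤ C) (hb : 0 < b)
    (htail : ∀ t : ℝ, 0 < t → (P {ω | X ω ≤ t}).toReal ≤ C * Real.exp (-b / t))
    (a : ℝ) (ha : 0 < a) (hab : a < b) :
    Integrable (fun ω => Real.exp (a / X ω)) P ∧
      ∫ ω, Real.exp (a / X ω) ∂P ≤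
        1 + C * a * (a / (b - a) ^ 2 + 1 / (b - a)) := by
  have hba : 0 < b - a := by linarith
  have ha' : a ≠ 0 := ne_of_gt ha
  have hba' : a - b ≠ 0 := by intro h; linarith [sub_eq_zero.mp h]
  have hba'' : b - a ≠ 0 := ne_of_gt hba
  set p : ℝ := b / a with hp
  have hp1 : 1 < p := (one_lt_div ha).mpr hab
  have hfm : Measurable fun ω => Real.exp (a / X ω) :=
    (measurable_const.div hX).exp
  have hfnn : ∀ ω, 0 ≤ Real.exp (a / X ω) := fun ω => (Real.exp_pos _).le
  -- tail bound in ENNReal for t > 1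
  have key : ∀ t : ℝ, t ∈ Set.Ioi (1:ℝ) →
      P {ω | t ≤ Real.exp (a / X ω)} ≤ ENNReal.ofReal (C * t ^ (-p)) := by
    intro t ht
    have ht1 : (1:ℝ) < t := ht
    have hlt : 0 < Real.log t := Real.log_pos ht1
    have hsub : ∀ᵐ ω ∂P,
        ω ∈ {ω | t ≤ Real.exp (a / X ω)} → ω ∈ {ω | X ω ≤ a / Real.log t} := by
      filter_upwards [hX_pos] with ω hω hmem
      have hmem' : t ≤ Real.exp (a / X ω) := hmem
      have h1 : Real.log t ≤ a / X ω := by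
        have := Real.log_le_log (by linarith) hmem'
        simpa [Real.log_exp] using this
      show X ω ≤ a / Real.log t
      rw [le_div_iff₀ hlt]
      calc X ω * Real.log t ≤ X ω * (a / X ω) :=
            mul_le_mul_of_nonneg_left h1 hω.le
        _ = a := by field_simp
    have h2 : P {ω | t ≤ Real.exp (a / X ω)} ≤ P {ω | X ω ≤ a / Real.log t} :=
      measure_mono_ae hsub
    have h3 := htail (a / Real.log t) (by positivity)
    have h4 : P {ω | X ω ≤ a / Real.log t}
        ≤ ENNReal.ofReal (C * Real.exp (-b / (a / Real.log t))) := by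
      rw [← ENNReal.ofReal_toReal (measure_ne_top P _)]
      exact ENNReal.ofReal_le_ofReal h3
    have hexp : -b / (a / Real.log t) = Real.log t * (-p) := by
      rw [hp]; field_simp
    have heq : C * Real.exp (-b / (a / Real.log t)) = C * t ^ (-p) := by
      rw [Real.rpow_def_of_pos (by linarith : (0:ℝ) < t), hexp]
    rw [← heq]
    exact h2.trans h4
  -- layer cake
  have layer := lintegral_eq_lintegral_meas_le P
    (Filter.Eventually.of_forall hfnn) hfm.aemeasurable
  -- compute the Ioi 1 integral
  have hint : IntegrableOn (fun t : ℝ => C * t ^ (-p)) (Set.Ioi 1) := by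
    exact (integrableOn_Ioi_rpow_of_lt (by linarith) one_pos).const_mul C
  have hval : ∫ t in Set.Ioi (1:ℝ), C * t ^ (-p) = C * (a / (b - a)) := by
    rw [integral_const_mul,
      integral_Ioi_rpow_of_lt (by linarith) one_pos]
    rw [Real.one_rpow, hp]
    have hp1' : 1 < b / a := hp ▸ hp1
    have hne : -(b / a) + 1 ≠ 0 := by intro h; linarith
    congr 1
    rw [div_eq_div_iff hne hba'']
    field_simp
    ring
  have hIoi : ∫⁻ t in Set.Ioi (1:ℝ), P {ω | t ≤ Real.exp (a / X ω)}
      ≤ ENNReal.ofReal (C * (a / (b - a))) := by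
    calc ∫⁻ t in Set.Ioi (1:ℝ), P {ω | t ≤ Real.exp (a / X ω)}
        ≤ ∫⁻ t in Set.Ioi (1:ℝ), ENNReal.ofReal (C * t ^ (-p)) := by
          refine setLIntegral_mono ?_ key
          exact ENNReal.measurable_ofReal.comp (by fun_prop)
      _ = ENNReal.ofReal (∫ t in Set.Ioi (1:ℝ), C * t ^ (-p)) := by
          rw [← ofReal_integral_eq_lintegral_ofReal hint ?_]
          refine (ae_restrict_iff' measurableSet_Ioi).mpr
            (Filter.Eventually.of_forall fun t ht => ?_)
          have : (0:ℝ) < t := lt_trans one_pos ht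
          exact mul_nonneg hC (Real.rpow_nonneg this.le _)
      _ = ENNReal.ofReal (C * (a / (b - a))) := by rw [hval]
  have hIoc : ∫⁻ t in Set.Ioc (0:ℝ) 1, P {ω | t ≤ Real.exp (a / X ω)}
      ≤ 1 := by
    calc ∫⁻ t in Set.Ioc (0:ℝ) 1, P {ω | t ≤ Real.exp (a / X ω)}
        ≤ ∫⁻ _ in Set.Ioc (0:ℝ) 1, 1 :=
          lintegral_mono fun t => prob_le_one
      _ = volume (Set.Ioc (0:ℝ) 1) := setLIntegral_one _
      _ = 1 := by rw [Real.volume_Ioc]; norm_num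
  have hsplit : (Set.Ioi (0:ℝ)) = Set.Ioc 0 1 ∪ Set.Ioi 1 :=
    (Set.Ioc_union_Ioi_eq_Ioi zero_le_one).symm
  have hmain : ∫⁻ ω, ENNReal.ofReal (Real.exp (a / X ω)) ∂P
      ≤ ENNReal.ofReal (1 + C * (a / (b - a))) := by
    rw [layer, hsplit, lintegral_union measurableSet_Ioi
      (Set.Ioc_disjoint_Ioi le_rfl)]
    rw [ENNReal.ofReal_add zero_le_one (by positivity), ENNReal.ofReal_one]
    exact add_le_add hIoc hIoi
  have hfin : ∫⁻ ω, ENNReal.ofReal (Real.exp (a / X ω)) ∂P < ⊤ :=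
    lt_of_le_of_lt hmain ENNReal.ofReal_lt_top
  have hInt : Integrable (fun ω => Real.exp (a / X ω)) P := by
    refine ⟨hfm.aestronglyMeasurable, ?_⟩
    rwa [hasFiniteIntegral_iff_ofReal (Filter.Eventually.of_forall hfnn)]
  refine ⟨hInt, ?_⟩
  have heq : ∫ ω, Real.exp (a / X ω) ∂P
      = (∫⁻ ω, ENNReal.ofReal (Real.exp (a / X ω)) ∂P).toReal :=
    integral_eq_lintegral_of_nonneg_ae (Filter.Eventually.of_forall hfnn)
      hfm.aestronglyMeasurable
  rw [heq]
  have h5 : (∫⁻ ω, ENNReal.ofReal (Real.exp (a / X ω)) ∂P).toReal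
      ≤ 1 + C * (a / (b - a)) :=
    ENNReal.toReal_le_of_le_ofReal (by positivity) hmain
  refine h5.trans ?_
  have h6 : 0 ≤ C * a * (a / (b - a) ^ 2) := by positivity
  have h7 : C * a * (1 / (b - a)) = C * (a / (b - a)) := by ring
  rw [mul_add]
  linarith
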